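/- Let X, Y be Banach spaces, x₀ ∈ X, r ∈ (0,∞], I = [τ₀, τ₀ + r), ψ ∈ C(I) non-decreasing, Ψ : B(x₀, 2r) → Y continuous and a ψ-covering, and Φ : B(x₀, r) → Y continuously Fréchet differentiable. Suppose there is an increasing function φ ∈ C¹(I) with ‖Φ(x₀) − Ψ(x₀)‖ ≤ φ(τ₀) − ψ(τ₀), and such that for each τ ∈ I, ‖x − x₀‖ ≤ τ − τ₀ implies ‖Φ'(x)‖ ≤ φ'(τ). If the equation ψ(τ) = φ(τ) has a smallest solution τ* in I, then there exists x* with ‖x* − x₀‖ ≤ τ* − τ₀ and Φ(x*) = Ψ(x*). -/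

import Mathlib

open Metric
open Set Filter


lemma coincidence_mvt_aux {X Y : Type*} [NormedAddCommGroup X] [NormedSpace ℝ X]
    [NormedAddCommGroup Y] [NormedSpace ℝ Y]
    (Φ : X → Y) (Φ' : X → X →L[ℝ] Y) (φ φd : ℝ → ℝ)
    (x x' : X) (τ τ' : ℝ)
    (hD : ∀ t ∈ Set.Icc (0:ℝ) 1, HasFDerivAt Φ (Φ' (x + t • (x' - x))) (x + t • (x' - x)))
    (hφ : ∀ t ∈ Set.Icc (0:ℝ) 1, HasDerivAt φ (φd (τ + t * (τ' - τ))) (τ + t * (τ' - τ)))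
    (hn : ‖x' - x‖ ≤ τ' - τ)
    (hb : ∀ t ∈ Set.Icc (0:ℝ) 1, ‖Φ' (x + t • (x' - x))‖ ≤ φd (τ + t * (τ' - τ))) :
    ‖Φ x' - Φ x‖ ≤ φ τ' - φ τ := by
  set γ : ℝ → X := fun t => x + t • (x' - x) with hγ
  set f : ℝ → Y := fun t => Φ (γ t) - Φ x with hf
  set f' : ℝ → Y := fun t => Φ' (γ t) (x' - x) with hf'
  set B : ℝ → ℝ := fun t => φ (τ + t * (τ' - τ)) - φ τ with hB
  set B' : ℝ → ℝ := fun t => φd (τ + t * (τ' - τ)) * (τ' - τ) with hB'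
  have hγd : ∀ t : ℝ, HasDerivAt γ (x' - x) t := by
    intro t
    simpa [hγ] using ((hasDerivAt_id t).smul_const (x' - x)).const_add x
  have hfd : ∀ t ∈ Set.Icc (0:ℝ) 1, HasDerivAt f (f' t) t := by
    intro t ht
    exact ((hD t ht).comp_hasDerivAt t (hγd t)).sub_const (Φ x)
  have hlin : ∀ t : ℝ, HasDerivAt (fun s => τ + s * (τ' - τ)) (τ' - τ) t := by
    intro t
    simpa using ((hasDerivAt_id t).mul_const (τ' - τ)).const_add τ
  have hBd : ∀ t ∈ Set.Icc (0:ℝ) 1, HasDerivAt B (B' t) t := by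
    intro t ht
    exact ((hφ t ht).comp t (hlin t)).sub_const (φ τ)
  have bound : ∀ t ∈ Set.Ico (0:ℝ) 1, ‖f' t‖ ≤ B' t := by
    intro t ht
    have ht' : t ∈ Set.Icc (0:ℝ) 1 := ⟨ht.1, ht.2.le⟩
    calc ‖f' t‖ ≤ ‖Φ' (γ t)‖ * ‖x' - x‖ := (Φ' (γ t)).le_opNorm _
      _ ≤ φd (τ + t * (τ' - τ)) * (τ' - τ) :=
        mul_le_mul (hb t ht') hn (norm_nonneg _) (le_trans (norm_nonneg _) (hb t ht'))
  have key := image_norm_le_of_norm_deriv_right_le_deriv_boundary'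
    (f := f) (a := 0) (b := 1) (f' := f')
    (fun t ht => ((hfd t ht).continuousAt).continuousWithinAt)
    (fun t ht => (hfd t ⟨ht.1, ht.2.le⟩).hasDerivWithinAt)
    (B := B) (B' := B')
    (by simp [hf, hB, hγ]) (fun t ht => ((hBd t ht).continuousAt).continuousWithinAt)
    (fun t ht => (hBd t ⟨ht.1, ht.2.le⟩).hasDerivWithinAt) bound
    (right_mem_Icc.2 zero_le_one)
  simpa [hf, hB, hγ] using key


/-- Main coincidence theorem: if `Ψ` is a `ψ`-covering on `B(x₀, r)` and `Φ` is
continuously Fréchet differentiable with `‖Φ(x₀) − Ψ(x₀)‖ ≤ φ(τ₀) − ψ(τ₀)` and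
`‖x − x₀‖ ≤ τ − τ₀ → ‖Φ'(x)‖ ≤ φ'(τ)`, and the equation `ψ(τ) = φ(τ)` has a smallest
solution `τ*` in `I = [τ₀, τ₀ + r)`, then there is a coincidence point `x*` with
`‖x* − x₀‖ ≤ τ* − τ₀`. Here `r ∈ (0, ∞]` is encoded as `r : ENNReal`, and membership
`τ ∈ I` as `τ₀ ≤ τ ∧ ENNReal.ofReal (τ − τ₀) < r`. -/
theorem coincidence_main
    {X Y : Type*} [NormedAddCommGroup X] [NormedSpace ℝ X] [CompleteSpace X]
    [NormedAddCommGroup Y] [NormedSpace ℝ Y] [CompleteSpace Y]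
    (x₀ : X) (r : ENNReal) (hr : 0 < r) (τ₀ : ℝ)
    (ψ φ : ℝ → ℝ) (φ' : ℝ → ℝ)
    (Ψ Φ : X → Y) (Φ' : X → X →L[ℝ] Y)
    -- ψ continuous and non-decreasing on I :
    (hψcont : ContinuousOn ψ {τ | τ₀ ≤ τ ∧ ENNReal.ofReal (τ - τ₀) < r})
    (hψmono : MonotoneOn ψ {τ | τ₀ ≤ τ ∧ ENNReal.ofReal (τ - τ₀) < r})
    -- Ψ continuous on B(x₀, 2r) :
    (hΨcont : ContinuousOn Ψ {x | ENNReal.ofReal ‖x - x₀‖ < 2 * r})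
    -- H1 : Ψ is a ψ-covering :
    (hΨcover : ∀ τ' τ'' : ℝ, τ₀ ≤ τ' → τ' < τ'' → ENNReal.ofReal (τ'' - τ₀) < r →
      ∀ x' : X, ENNReal.ofReal ‖x' - x₀‖ < r →
        closedBall (Ψ x') (ψ τ'' - ψ τ') ⊆ Ψ '' closedBall x' (τ'' - τ'))
    -- Φ is continuously Fréchet differentiable on B(x₀, r) :
    (hΦderiv : ∀ x : X, ENNReal.ofReal ‖x - x₀‖ < r → HasFDerivAt Φ (Φ' x) x)
    (hΦ'cont : ContinuousOn Φ' {x | ENNReal.ofReal ‖x - x₀‖ < r})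
    -- φ is C¹ and increasing on I :
    (hφderiv : ∀ τ : ℝ, τ₀ ≤ τ → ENNReal.ofReal (τ - τ₀) < r → HasDerivAt φ (φ' τ) τ)
    (hφ'cont : ContinuousOn φ' {τ | τ₀ ≤ τ ∧ ENNReal.ofReal (τ - τ₀) < r})
    (hφmono : StrictMonoOn φ {τ | τ₀ ≤ τ ∧ ENNReal.ofReal (τ - τ₀) < r})
    -- H2 :
    (hinit : ‖Φ x₀ - Ψ x₀‖ ≤ φ τ₀ - ψ τ₀)
    (hbound : ∀ τ : ℝ, τ₀ ≤ τ → ENNReal.ofReal (τ - τ₀) < r →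
      ∀ x : X, ‖x - x₀‖ ≤ τ - τ₀ → ‖Φ' x‖ ≤ φ' τ)
    -- τ* is the smallest solution in I of ψ(τ) = φ(τ) :
    (τ_star : ℝ) (hτ₀ : τ₀ ≤ τ_star) (hτr : ENNReal.ofReal (τ_star - τ₀) < r)
    (hsol : ψ τ_star = φ τ_star)
    (hmin : ∀ τ : ℝ, τ₀ ≤ τ → ENNReal.ofReal (τ - τ₀) < r → ψ τ = φ τ → τ_star ≤ τ) :
    ∃ x_star : X, ‖x_star - x₀‖ ≤ τ_star - τ₀ ∧ Φ x_star = Ψ x_star := by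
  classical
  set S : Set ℝ := {τ | τ₀ ≤ τ ∧ ENNReal.ofReal (τ - τ₀) < r} with hS
  -- membership helpers
  have hmemS : ∀ τ : ℝ, τ₀ ≤ τ → τ ≤ τ_star → τ ∈ S := by
    intro τ h1 h2
    exact ⟨h1, lt_of_le_of_lt (ENNReal.ofReal_le_ofReal (by linarith)) hτr⟩
  have hballr : ∀ x : X, ‖x - x₀‖ ≤ τ_star - τ₀ → ENNReal.ofReal ‖x - x₀‖ < r := by
    intro x hx
    exact lt_of_le_of_lt (ENNReal.ofReal_le_ofReal hx) hτr
  -- the invariant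
  set Inv : ℝ × X → Prop := fun p => τ₀ ≤ p.1 ∧ p.1 ≤ τ_star ∧ ‖p.2 - x₀‖ ≤ p.1 - τ₀ ∧
      ‖Φ p.2 - Ψ p.2‖ ≤ φ p.1 - ψ p.1 with hInv
  have inv0 : Inv (τ₀, x₀) := by
    refine ⟨le_refl _, hτ₀, by simp, by simpa using hinit⟩
  -- the key step
  have key : ∀ p : ℝ × X, Inv p → ∃ q : ℝ × X, Inv q ∧ p.1 ≤ q.1 ∧
      ‖q.2 - p.2‖ ≤ q.1 - p.1 ∧ ψ q.1 = φ p.1 := by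
    rintro ⟨τ, x⟩ ⟨h1, h2, h3, h4⟩
    simp only at h1 h2 h3 h4 ⊢
    by_cases heq : ψ τ = φ τ
    · refine ⟨(τ, x), ⟨h1, h2, h3, h4⟩, le_refl _, by simp, heq⟩
    · have hlt : ψ τ < φ τ := lt_of_le_of_ne (by nlinarith [norm_nonneg (Φ x - Ψ x)]) heq
      have hττ : τ < τ_star := by
        rcases lt_or_eq_of_le h2 with h | h
        · exact h
        · exact absurd (h ▸ hsol) heq
      -- IVT: find σ ∈ (τ, τ_star] with ψ σ = φ τ
      have hsub : Icc τ τ_star ⊆ S := fun σ hσ => hmemS σ (le_trans h1 hσ.1) hσ.2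
      have hivt := intermediate_value_Icc (le_of_lt hττ) (hψcont.mono hsub)
      have hφτmem : φ τ ∈ Icc (ψ τ) (ψ τ_star) := by
        constructor
        · exact hlt.le
        · rw [hsol]
          exact (hφmono (hmemS τ h1 h2) (hmemS τ_star hτ₀ le_rfl) hττ).le
      obtain ⟨σ, hσmem, hσeq⟩ := hivt hφτmem
      have hτσ : τ < σ := by
        rcases lt_or_eq_of_le hσmem.1 with h | h
        · exact h
        · exfalso; rw [← h] at hσeq; linarith
      -- apply the covering property
      have hΦmem : Φ x ∈ closedBall (Ψ x) (ψ σ - ψ τ) := by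
        rw [mem_closedBall, dist_eq_norm]
        rw [hσeq]; exact h4
      obtain ⟨x', hx'ball, hx'eq⟩ := hΨcover τ σ h1 hτσ
        (lt_of_le_of_lt (ENNReal.ofReal_le_ofReal (by linarith [hσmem.2])) hτr)
        x (hballr x (le_trans h3 (by linarith))) hΦmem
      rw [mem_closedBall, dist_eq_norm] at hx'ball
      have hx'x₀ : ‖x' - x₀‖ ≤ σ - τ₀ := by
        calc ‖x' - x₀‖ = ‖(x' - x) + (x - x₀)‖ := by rw [sub_add_sub_cancel]
          _ ≤ ‖x' - x‖ + ‖x - x₀‖ := norm_add_le _ _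
          _ ≤ (σ - τ) + (τ - τ₀) := add_le_add hx'ball h3
          _ = σ - τ₀ := by ring
      -- mean value estimate
      have hseg : ∀ t ∈ Set.Icc (0:ℝ) 1, ‖(x + t • (x' - x)) - x₀‖ ≤ (τ + t * (σ - τ)) - τ₀ := by
        intro t ht
        calc ‖(x + t • (x' - x)) - x₀‖ = ‖(x - x₀) + t • (x' - x)‖ := by
              congr 1; abel
          _ ≤ ‖x - x₀‖ + ‖t • (x' - x)‖ := norm_add_le _ _
          _ = ‖x - x₀‖ + t * ‖x' - x‖ := by
              rw [norm_smul, Real.norm_eq_abs, abs_of_nonneg ht.1]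
          _ ≤ (τ - τ₀) + t * (σ - τ) := add_le_add h3
              (mul_le_mul_of_nonneg_left hx'ball ht.1)
          _ = (τ + t * (σ - τ)) - τ₀ := by ring
      have hsegτ : ∀ t ∈ Set.Icc (0:ℝ) 1, τ₀ ≤ τ + t * (σ - τ) ∧ τ + t * (σ - τ) ≤ τ_star := by
        intro t ht
        constructor
        · nlinarith [ht.1, hτσ]
        · nlinarith [ht.2, ht.1, hσmem.2, hτσ]
      have hmvt : ‖Φ x' - Φ x‖ ≤ φ σ - φ τ := by
        apply coincidence_mvt_aux Φ Φ' φ φ' x x' τ σ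
        · intro t ht
          apply hΦderiv
          apply hballr
          exact le_trans (hseg t ht) (by linarith [(hsegτ t ht).2])
        · intro t ht
          exact hφderiv _ (hsegτ t ht).1
            (lt_of_le_of_lt (ENNReal.ofReal_le_ofReal (by linarith [(hsegτ t ht).2])) hτr)
        · exact hx'ball
        · intro t ht
          exact hbound _ (hsegτ t ht).1
            (lt_of_le_of_lt (ENNReal.ofReal_le_ofReal (by linarith [(hsegτ t ht).2])) hτr)
            _ (hseg t ht)
      refine ⟨(σ, x'), ⟨le_trans h1 hτσ.le, hσmem.2, hx'x₀, ?_⟩, hτσ.le, hx'ball, hσeq⟩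
      simp only
      rw [hx'eq, hσeq]
      linarith [hmvt]
  -- build the sequence
  let F : {p : ℝ × X // Inv p} → {p : ℝ × X // Inv p} := fun p =>
    ⟨(key p.1 p.2).choose, (key p.1 p.2).choose_spec.1⟩
  let p0 : {p : ℝ × X // Inv p} := ⟨(τ₀, x₀), inv0⟩
  let u : ℕ → {p : ℝ × X // Inv p} := fun n => F^[n] p0
  set τs : ℕ → ℝ := fun n => (u n).1.1 with hτs
  set xs : ℕ → X := fun n => (u n).1.2 with hxs
  have hInvn : ∀ n, τ₀ ≤ τs n ∧ τs n ≤ τ_star ∧ ‖xs n - x₀‖ ≤ τs n - τ₀ ∧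
      ‖Φ (xs n) - Ψ (xs n)‖ ≤ φ (τs n) - ψ (τs n) := fun n => (u n).2
  have hstep : ∀ n, τs n ≤ τs (n+1) ∧ ‖xs (n+1) - xs n‖ ≤ τs (n+1) - τs n ∧
      ψ (τs (n+1)) = φ (τs n) := by
    intro n
    have hu : u (n+1) = F (u n) := Function.iterate_succ_apply' F n p0
    have : (u (n+1)).1 = (key (u n).1 (u n).2).choose := by rw [hu]
    have hspec := (key (u n).1 (u n).2).choose_spec
    rw [← this] at hspec
    exact ⟨hspec.2.1, hspec.2.2.1, hspec.2.2.2⟩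
  have hτmono : Monotone τs := monotone_nat_of_le_succ fun n => (hstep n).1
  have hτbdd : ∀ n, τs n ≤ τ_star := fun n => (hInvn n).2.1
  -- convergence of τs
  have hτconv : Tendsto τs atTop (nhds (⨆ n, τs n)) :=
    tendsto_atTop_ciSup hτmono ⟨τ_star, fun y ⟨n, hn⟩ => hn ▸ hτbdd n⟩
  set l : ℝ := ⨆ n, τs n with hl
  have hτsle : ∀ n, τs n ≤ l := fun n => le_ciSup ⟨τ_star, fun y ⟨m, hm⟩ => hm ▸ hτbdd m⟩ n
  have hlle : l ≤ τ_star := ciSup_le hτbdd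
  have hτ₀l : τ₀ ≤ l := le_trans (hInvn 0).1 (hτsle 0)
  -- chain estimate and Cauchy
  have hchain : ∀ n m, n ≤ m → dist (xs n) (xs m) ≤ τs m - τs n := by
    intro n m hnm
    induction m, hnm using Nat.le_induction with
    | base => simp
    | succ m hnm ih =>
        calc dist (xs n) (xs m.succ) ≤ dist (xs n) (xs m) + dist (xs m) (xs m.succ) :=
              dist_triangle _ _ _
          _ ≤ (τs m - τs n) + (τs (m+1) - τs m) := by
              refine add_le_add ih ?_
              rw [dist_eq_norm, norm_sub_rev]
              exact (hstep m).2.1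
          _ = τs (m+1) - τs n := by ring
  have hcauchy : CauchySeq xs := by
    apply cauchySeq_of_le_tendsto_0 (fun N => l - τs N)
    · intro n m N hn hm
      rcases le_total n m with h | h
      · calc dist (xs n) (xs m) ≤ τs m - τs n := hchain n m h
          _ ≤ l - τs N := by linarith [hτsle m, hτmono hn]
      · calc dist (xs n) (xs m) = dist (xs m) (xs n) := dist_comm _ _
          _ ≤ τs n - τs m := hchain m n h
          _ ≤ l - τs N := by linarith [hτsle n, hτmono hm]
    · have := hτconv.const_sub l
      simpa using this
  obtain ⟨x_star, hxconv⟩ := cauchySeq_tendsto_of_complete hcauchy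
  -- bound on limit
  have hxsbd : ∀ n, ‖xs n - x₀‖ ≤ l - τ₀ := fun n => le_trans (hInvn n).2.2.1
    (by linarith [hτsle n])
  have hxnorm : Tendsto (fun n => ‖xs n - x₀‖) atTop (nhds ‖x_star - x₀‖) :=
    ((continuous_norm.comp (continuous_id.sub continuous_const)).continuousAt.tendsto).comp hxconv
  have hx_starbd : ‖x_star - x₀‖ ≤ l - τ₀ :=
    le_of_tendsto hxnorm (Eventually.of_forall hxsbd)
  -- ψ l = φ l
  have hlS : l ∈ S := hmemS l hτ₀l hlle
  have hτsS : ∀ n, τs n ∈ S := fun n => hmemS _ (hInvn n).1 (hτbdd n)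
  have hτconvS : Tendsto τs atTop (nhdsWithin l S) :=
    tendsto_nhdsWithin_of_tendsto_nhds_of_eventually_within τs hτconv
      (Eventually.of_forall hτsS)
  have hψτ : Tendsto (fun n => ψ (τs n)) atTop (nhds (ψ l)) :=
    ((hψcont l hlS).tendsto).comp hτconvS
  have hφτ : Tendsto (fun n => φ (τs n)) atTop (nhds (φ l)) :=
    ((hφderiv l hτ₀l hlS.2).continuousAt.tendsto).comp hτconv
  have hψl : ψ l = φ l := by
    have h1 : Tendsto (fun n => ψ (τs (n+1))) atTop (nhds (ψ l)) :=
      hψτ.comp (tendsto_add_atTop_nat 1)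
    have h2 : (fun n => ψ (τs (n+1))) = fun n => φ (τs n) :=
      funext fun n => (hstep n).2.2
    rw [h2] at h1
    exact tendsto_nhds_unique h1 hφτ
  have hlτstar : l = τ_star := le_antisymm hlle (hmin l hτ₀l hlS.2 hψl)
  refine ⟨x_star, by rw [← hlτstar]; exact hx_starbd, ?_⟩
  -- Φ x_star = Ψ x_star
  have hxstarr : ENNReal.ofReal ‖x_star - x₀‖ < r := hballr _ (hlτstar ▸ hx_starbd)
  have hΦconv : Tendsto (fun n => Φ (xs n)) atTop (nhds (Φ x_star)) :=
    ((hΦderiv x_star hxstarr).continuousAt.tendsto).comp hxconv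
  have hr2 : r ≤ 2 * r := by
    calc r = 1 * r := (one_mul r).symm
      _ ≤ 2 * r := mul_le_mul_left one_le_two r
  have hxsS2 : ∀ n, xs n ∈ {x : X | ENNReal.ofReal ‖x - x₀‖ < 2 * r} := by
    intro n
    exact lt_of_lt_of_le (hballr _ (le_trans (hInvn n).2.2.1 (by linarith [hτbdd n]))) hr2
  have hxstarS2 : x_star ∈ {x : X | ENNReal.ofReal ‖x - x₀‖ < 2 * r} :=
    lt_of_lt_of_le hxstarr hr2
  have hΨconv : Tendsto (fun n => Ψ (xs n)) atTop (nhds (Ψ x_star)) :=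
    ((hΨcont x_star hxstarS2).tendsto).comp
      (tendsto_nhdsWithin_of_tendsto_nhds_of_eventually_within xs hxconv
        (Eventually.of_forall hxsS2))
  have hnormconv : Tendsto (fun n => ‖Φ (xs n) - Ψ (xs n)‖) atTop
      (nhds ‖Φ x_star - Ψ x_star‖) := (hΦconv.sub hΨconv).norm
  have hzero : Tendsto (fun n => φ (τs n) - ψ (τs n)) atTop (nhds 0) := by
    have := hφτ.sub hψτ
    rwa [hψl, sub_self] at this
  have hle : ‖Φ x_star - Ψ x_star‖ ≤ 0 :=
    le_of_tendsto_of_tendsto' hnormconv hzero (fun n => (hInvn n).2.2.2)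
  have : Φ x_star - Ψ x_star = 0 := norm_le_zero_iff.mp hle
  exact sub_eq_zero.mp this
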